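/- Strict convex duals of intersections and sums of proper cones (part (v) of the paper's Proposition on convex cones, strict-dual version): Let V be a finite-dimensional real inner product space and C₁, C₂ ⊆ V nonempty open convex cones, each satisfying closure(Cᵢ) ∩ (−closure(Cᵢ)) = {0}, and with C₁ ∩ C₂ nonempty. Then (C₁ ∩ C₂)^⊛ = C₁^⊛ + C₂^⊛, where + denotes the Minkowski sum, and (C₁ + C₂)^⊛ = C₁^⊛ ∩ C₂^⊛. -/

import Mathlib

open scoped RealInnerProductSpace Pointwise

/-- The strict convex dual of a subset `C` of a real inner product space:
all vectors pairing strictly positively with every nonzero element of `closure C`. -/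
def strictDual {V : Type*} [NormedAddCommGroup V] [InnerProductSpace ℝ V]
    (C : Set V) : Set V :=
  {u : V | ∀ v ∈ closure C, v ≠ 0 → 0 < ⟪u, v⟫}

section InnerDualShim

variable {H : Type*} [NormedAddCommGroup H] [InnerProductSpace ℝ H]

/-- The inner dual cone of a set (as a convex cone). -/
def Set.innerDualCone (s : Set H) : ConvexCone ℝ H where
  carrier := { y | ∀ x ∈ s, 0 ≤ ⟪x, y⟫ }
  smul_mem' c hc y hy x hx := by rw [real_inner_smul_right]; exact mul_nonneg hc.le (hy x hx)
  add_mem' u hu v hv x hx := by rw [inner_add_right]; exact add_nonneg (hu x hx) (hv x hx)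

theorem mem_innerDualCone (y : H) (s : Set H) :
    y ∈ s.innerDualCone ↔ ∀ x ∈ s, 0 ≤ ⟪x, y⟫ := Iff.rfl

theorem pointed_innerDualCone (s : Set H) : (0 : H) ∈ (s.innerDualCone : Set H) :=
  fun x _ => by rw [inner_zero_right]

theorem ConvexCone.innerDualCone_of_innerDualCone_eq_self [CompleteSpace H] (K : ConvexCone ℝ H)
    (ne : (K : Set H).Nonempty) (hc : IsClosed (K : Set H)) :
    ((K : Set H).innerDualCone : Set H).innerDualCone = K := by
  let P : ProperCone ℝ H :=
    ⟨K.toPointedCone (ConvexCone.Pointed.of_nonempty_of_isClosed ne hc), hc⟩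
  have h := ProperCone.innerDual_innerDual P
  ext x
  exact SetLike.ext_iff.mp h x

end InnerDualShim

section AuxLemmas

variable {V : Type*} [NormedAddCommGroup V] [InnerProductSpace ℝ V]

/-- The closure of a cone is a cone. -/
lemma StrictDualAux.closureCone {C : Set V} (h : ∀ c ∈ C, ∀ t : ℝ, 0 < t → t • c ∈ C) :
    ∀ v ∈ closure C, ∀ t : ℝ, 0 < t → t • v ∈ closure C := by
  intro v hv t ht
  have h1 : t • v ∈ (t • ·) '' closure C := Set.mem_image_of_mem _ hv
  have h2 : (t • ·) '' closure C ⊆ closure ((t • ·) '' C) :=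
    image_closure_subset_closure_image (continuous_const_smul t)
  refine closure_mono ?_ (h2 h1)
  rintro x ⟨c, hc, rfl⟩
  exact h c hc t ht

/-- `0` is in the closure of a nonempty cone. -/
lemma StrictDualAux.zeroMemClosure {C : Set V} (hne : C.Nonempty)
    (h : ∀ c ∈ C, ∀ t : ℝ, 0 < t → t • c ∈ C) : (0 : V) ∈ closure C := by
  obtain ⟨c, hc⟩ := hne
  have htend : Filter.Tendsto (fun t : ℝ => t • c) (nhdsWithin 0 (Set.Ioi 0)) (nhds 0) := by
    have hcont : Continuous fun t : ℝ => t • c := continuous_id.smul continuous_const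
    have := hcont.tendsto 0
    simpa using this.mono_left nhdsWithin_le_nhds
  refine mem_closure_of_tendsto htend ?_
  filter_upwards [self_mem_nhdsWithin] with t ht
  exact h c hc t ht

/-- A strictly positive functional on a closed cone is uniformly positive. -/
lemma StrictDualAux.existsPosBound [FiniteDimensional ℝ V] {K : Set V} (hKc : IsClosed K)
    (hcone : ∀ v ∈ K, ∀ t : ℝ, 0 < t → t • v ∈ K) {u : V}
    (hu : ∀ v ∈ K, v ≠ 0 → 0 < ⟪u, v⟫) :
    ∃ ε : ℝ, 0 < ε ∧ ∀ v ∈ K, ε * ‖v‖ ≤ ⟪u, v⟫ := by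
  by_cases hS : (K ∩ Metric.sphere 0 1).Nonempty
  · have hcompact : IsCompact (K ∩ Metric.sphere 0 1) :=
      Metric.isCompact_of_isClosed_isBounded (hKc.inter Metric.isClosed_sphere)
        (Metric.isBounded_sphere.subset Set.inter_subset_right)
    have hcont : ContinuousOn (fun v : V => ⟪u, v⟫) (K ∩ Metric.sphere 0 1) :=
      (continuous_const.inner continuous_id).continuousOn
    obtain ⟨v₀, hv₀, hmin⟩ := hcompact.exists_isMinOn hS hcont
    have hv₀ne : v₀ ≠ 0 := by
      intro h
      have := hv₀.2
      rw [h, mem_sphere_zero_iff_norm] at this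
      simp at this
    refine ⟨⟪u, v₀⟫, hu v₀ hv₀.1 hv₀ne, ?_⟩
    intro v hv
    rcases eq_or_ne v 0 with rfl | hvne
    · simp
    · have hnv : (0:ℝ) < ‖v‖ := norm_pos_iff.mpr hvne
      have hw : ‖v‖⁻¹ • v ∈ K ∩ Metric.sphere 0 1 := by
        refine ⟨hcone v hv _ (by positivity), ?_⟩
        rw [mem_sphere_zero_iff_norm, norm_smul, norm_inv, norm_norm]
        field_simp
      have hle : ⟪u, v₀⟫ ≤ ⟪u, ‖v‖⁻¹ • v⟫ := hmin hw
      rw [real_inner_smul_right] at hle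
      calc ⟪u, v₀⟫ * ‖v‖ ≤ (‖v‖⁻¹ * ⟪u, v⟫) * ‖v‖ := by nlinarith
        _ = ⟪u, v⟫ := by field_simp
  · refine ⟨1, one_pos, ?_⟩
    intro v hv
    have hv0 : v = 0 := by
      by_contra h
      have hnv : (0:ℝ) < ‖v‖ := norm_pos_iff.mpr h
      exact hS ⟨‖v‖⁻¹ • v, hcone v hv _ (by positivity), by
        rw [mem_sphere_zero_iff_norm, norm_smul, norm_inv, norm_norm]; field_simp⟩
    simp [hv0]

/-- The strict dual of a cone is the interior of the inner dual cone of its closure. -/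
lemma StrictDualAux.strictDual_eq_interior [FiniteDimensional ℝ V] {C : Set V}
    (hcone : ∀ c ∈ C, ∀ t : ℝ, 0 < t → t • c ∈ C) :
    strictDual C = interior ((closure C).innerDualCone : Set V) := by
  ext u
  constructor
  · intro hu
    obtain ⟨ε, hε, hb⟩ := StrictDualAux.existsPosBound isClosed_closure
      (StrictDualAux.closureCone hcone) hu
    refine mem_interior.mpr ⟨Metric.ball u ε, ?_, Metric.isOpen_ball, Metric.mem_ball_self hε⟩
    intro u' hu'
    rw [SetLike.mem_coe, mem_innerDualCone]
    intro v hv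
    rw [real_inner_comm]
    have h1 : ε * ‖v‖ ≤ ⟪u, v⟫ := hb v hv
    have h2 : |⟪u' - u, v⟫| ≤ ‖u' - u‖ * ‖v‖ := abs_real_inner_le_norm _ _
    have h3 : ⟪u' - u, v⟫ = ⟪u', v⟫ - ⟪u, v⟫ := inner_sub_left _ _ _
    have h4 : ‖u' - u‖ < ε := by rw [← dist_eq_norm]; exact Metric.mem_ball.mp hu'
    have h5 := abs_le.mp h2
    nlinarith [norm_nonneg v, norm_nonneg (u' - u)]
  · intro hu v hv hvne
    have hd : u ∈ ((closure C).innerDualCone : Set V) := interior_subset hu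
    have hge : 0 ≤ ⟪u, v⟫ := by
      rw [real_inner_comm]
      exact (mem_innerDualCone _ _).mp hd v hv
    rcases hge.lt_or_eq with h | h
    · exact h
    · exfalso
      obtain ⟨δ, hδ, hball⟩ := Metric.mem_nhds_iff.mp (mem_interior_iff_mem_nhds.mp hu)
      have hnv : (0:ℝ) < ‖v‖ := norm_pos_iff.mpr hvne
      set c : ℝ := δ / (2 * ‖v‖) with hc
      have hcpos : 0 < c := by positivity
      have hmem : u - c • v ∈ Metric.ball u δ := by
        rw [Metric.mem_ball, dist_eq_norm]
        have : u - c • v - u = -(c • v) := by abel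
        rw [this, norm_neg, norm_smul, Real.norm_eq_abs, abs_of_pos hcpos, hc]
        rw [div_mul_eq_mul_div, mul_comm]
        rw [div_lt_iff₀ (by positivity)]
        nlinarith
      have hd' : u - c • v ∈ ((closure C).innerDualCone : Set V) := hball hmem
      have := (mem_innerDualCone _ _).mp hd' v hv
      rw [inner_sub_right, real_inner_smul_right, real_inner_self_eq_norm_sq] at this
      have hvu : ⟪v, u⟫ = 0 := by rw [real_inner_comm]; exact h.symm
      rw [hvu] at this
      have hp : 0 < c * ‖v‖ ^ 2 := by positivity
      linarith

/-- Closure of an intersection of open convex sets with nonempty intersection. -/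
lemma StrictDualAux.closureInter {C₁ C₂ : Set V} (h₁open : IsOpen C₁) (h₁conv : Convex ℝ C₁)
    (h₂open : IsOpen C₂) (h₂conv : Convex ℝ C₂) (hcap : (C₁ ∩ C₂).Nonempty) :
    closure (C₁ ∩ C₂) = closure C₁ ∩ closure C₂ := by
  refine Set.Subset.antisymm (Set.subset_inter (closure_mono Set.inter_subset_left)
    (closure_mono Set.inter_subset_right)) ?_
  rintro x ⟨hx₁, hx₂⟩
  obtain ⟨p, hp₁, hp₂⟩ := hcap
  have key : ∀ t : ℝ, 0 < t → t < 1 → t • p + (1 - t) • x ∈ C₁ ∩ C₂ := by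
    intro t ht ht1
    constructor
    · have hp' : p ∈ interior C₁ := h₁open.interior_eq.symm ▸ hp₁
      exact interior_subset
        (h₁conv.combo_interior_closure_mem_interior hp' hx₁ ht (by linarith) (by ring))
    · have hp' : p ∈ interior C₂ := h₂open.interior_eq.symm ▸ hp₂
      exact interior_subset
        (h₂conv.combo_interior_closure_mem_interior hp' hx₂ ht (by linarith) (by ring))
  have htend : Filter.Tendsto (fun t : ℝ => t • p + (1 - t) • x)
      (nhdsWithin 0 (Set.Ioi (0:ℝ))) (nhds x) := by
    have hcont : Continuous fun t : ℝ => t • p + (1 - t) • x := by continuity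
    have := hcont.tendsto 0
    simpa using this.mono_left nhdsWithin_le_nhds
  refine mem_closure_of_tendsto htend ?_
  have hlt : ∀ᶠ t in nhdsWithin (0:ℝ) (Set.Ioi 0), t < 1 :=
    (eventually_lt_nhds zero_lt_one).filter_mono nhdsWithin_le_nhds
  filter_upwards [self_mem_nhdsWithin, hlt] with t ht ht1
  exact key t ht ht1

/-- Interior of the closure of a convex set with nonempty interior. -/
lemma StrictDualAux.interiorClosure {A : Set V} (hA : Convex ℝ A)
    (hne : (interior A).Nonempty) :
    interior (closure A) = interior A := by
  refine Set.Subset.antisymm ?_ (interior_mono subset_closure)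
  intro x hx
  obtain ⟨p, hp⟩ := hne
  rcases eq_or_ne x p with rfl | hxp
  · exact hp
  obtain ⟨δ, hδ, hball⟩ := Metric.mem_nhds_iff.mp (mem_interior_iff_mem_nhds.mp hx)
  have hnxp : (0:ℝ) < ‖x - p‖ := by
    rw [norm_pos_iff]; exact sub_ne_zero.mpr hxp
  set s : ℝ := δ / (2 * ‖x - p‖) with hs
  have hspos : 0 < s := by positivity
  have hy : x + s • (x - p) ∈ closure A := by
    apply hball
    rw [Metric.mem_ball, dist_eq_norm]
    have : x + s • (x - p) - x = s • (x - p) := by abel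
    rw [this, norm_smul, Real.norm_eq_abs, abs_of_pos hspos, hs]
    rw [div_mul_eq_mul_div, mul_comm, div_lt_iff₀ (by positivity)]
    nlinarith
  have h1s : (0:ℝ) < 1 + s := by linarith
  have hxeq : x = (s / (1 + s)) • p + (1 / (1 + s)) • (x + s • (x - p)) := by
    have h1s' : (1 + s) ≠ 0 := ne_of_gt h1s
    match_scalars <;> field_simp <;> ring
  rw [hxeq]
  exact hA.combo_interior_closure_mem_interior hp hy (by positivity)
    (by positivity) (by field_simp; ring)

/-- Interior of a Minkowski sum of convex sets with nonempty interiors. -/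
lemma StrictDualAux.interiorAdd {A B : Set V} (hA : Convex ℝ A) (hB : Convex ℝ B)
    (ha : (interior A).Nonempty) (hb : (interior B).Nonempty) :
    interior (A + B) = interior A + interior B := by
  obtain ⟨a₀, ha₀⟩ := ha
  obtain ⟨b₀, hb₀⟩ := hb
  refine Set.Subset.antisymm ?_ ?_
  · intro x hx
    obtain ⟨δ, hδ, hball⟩ := Metric.mem_nhds_iff.mp (mem_interior_iff_mem_nhds.mp hx)
    rcases eq_or_ne x (a₀ + b₀) with rfl | hxp
    · exact Set.add_mem_add ha₀ hb₀
    have hnxp : (0:ℝ) < ‖x - (a₀ + b₀)‖ := by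
      rw [norm_pos_iff]; exact sub_ne_zero.mpr hxp
    set s : ℝ := δ / (2 * ‖x - (a₀ + b₀)‖) with hs
    have hspos : 0 < s := by positivity
    have hy : x + s • (x - (a₀ + b₀)) ∈ A + B := by
      apply hball
      rw [Metric.mem_ball, dist_eq_norm]
      have h0 : x + s • (x - (a₀ + b₀)) - x = s • (x - (a₀ + b₀)) := by abel
      rw [h0, norm_smul, Real.norm_eq_abs, abs_of_pos hspos, hs]
      rw [div_mul_eq_mul_div, mul_comm, div_lt_iff₀ (by positivity)]
      nlinarith
    obtain ⟨a, haA, b, hbB, hab⟩ := Set.mem_add.mp hy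
    have h1s : (0:ℝ) < 1 + s := by linarith
    have h1s' : (1 + s) ≠ 0 := ne_of_gt h1s
    have hmemA : (1 / (1 + s)) • a + (s / (1 + s)) • a₀ ∈ interior A :=
      hA.combo_closure_interior_mem_interior (subset_closure haA) ha₀
        (by positivity) (by positivity) (by field_simp)
    have hmemB : (1 / (1 + s)) • b + (s / (1 + s)) • b₀ ∈ interior B :=
      hB.combo_closure_interior_mem_interior (subset_closure hbB) hb₀
        (by positivity) (by positivity) (by field_simp)
    refine Set.mem_add.mpr ⟨_, hmemA, _, hmemB, ?_⟩
    have hb' : b = x + s • (x - (a₀ + b₀)) - a := by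
      rw [← hab]; abel
    rw [hb']
    match_scalars <;> field_simp <;> ring
  · have hsub : interior A + interior B ⊆ A + B :=
      Set.add_subset_add interior_subset interior_subset
    have hopen : IsOpen (interior A + interior B) := isOpen_interior.add_right
    exact interior_maximal hsub hopen

/-- Bipolar theorem for closed convex cone sets. -/
lemma StrictDualAux.bipolar [FiniteDimensional ℝ V] {K : Set V} (hcl : IsClosed K)
    (hco : Convex ℝ K)
    (hcone : ∀ v ∈ K, ∀ t : ℝ, 0 < t → t • v ∈ K) (hne : K.Nonempty) :
    (((K.innerDualCone : Set V)).innerDualCone : Set V) = K := by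
  set K' : ConvexCone ℝ V :=
    { carrier := K
      smul_mem' := fun c hc x hx => hcone x hx c hc
      add_mem' := by
        intro x hx y hy
        have h : (1/2 : ℝ) • x + (1/2 : ℝ) • y ∈ K :=
          hco hx hy (by norm_num) (by norm_num) (by norm_num)
        have := hcone _ h 2 (by norm_num)
        rw [smul_add, smul_smul, smul_smul] at this
        norm_num at this
        exact this } with hK'
  have hKK' : (K' : Set V) = K := rfl
  have := ConvexCone.innerDualCone_of_innerDualCone_eq_self K' (by rwa [hKK']) (by rwa [hKK'])
  calc (((K.innerDualCone : Set V)).innerDualCone : Set V)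
      = (((K' : Set V).innerDualCone : Set V).innerDualCone : Set V) := by rw [hKK']
    _ = (K' : Set V) := by rw [this]
    _ = K := hKK'

/-- The dual of a salient closed convex cone has nonempty interior. -/
lemma StrictDualAux.dualInteriorNonempty [FiniteDimensional ℝ V] {K : Set V}
    (hcl : IsClosed K) (hco : Convex ℝ K)
    (hcone : ∀ v ∈ K, ∀ t : ℝ, 0 < t → t • v ∈ K) (h0 : (0:V) ∈ K)
    (hsal : K ∩ (-K) = {0}) :
    (interior ((K.innerDualCone : Set V))).Nonempty := by
  set D : Set V := (K.innerDualCone : Set V) with hD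
  have hDconv : Convex ℝ D := (K.innerDualCone).convex
  have h0D : (0:V) ∈ D := pointed_innerDualCone K
  by_cases hspan : Submodule.span ℝ D = ⊤
  · have hvs : vectorSpan ℝ D = ⊤ := by
      rw [eq_top_iff, ← hspan]
      refine Submodule.span_le.mpr fun d hd => ?_
      have := vsub_mem_vectorSpan ℝ hd h0D
      simpa using this
    have haff : affineSpan ℝ D = ⊤ :=
      (AffineSubspace.affineSpan_eq_top_iff_vectorSpan_eq_top_of_nonempty ℝ V V
        ⟨0, h0D⟩).mpr hvs
    exact hDconv.interior_nonempty_iff_affineSpan_eq_top.mpr haff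
  · exfalso
    have hbot : (Submodule.span ℝ D)ᗮ ≠ ⊥ := by
      intro h
      exact hspan (Submodule.orthogonal_eq_bot_iff.mp h)
    obtain ⟨w, hw, hwne⟩ := Submodule.exists_mem_ne_zero_of_ne_bot hbot
    have hwD : ∀ y ∈ D, ⟪y, w⟫ = 0 := fun y hy =>
      (Submodule.mem_orthogonal _ _).mp hw y (Submodule.subset_span hy)
    have hwK : w ∈ K := by
      rw [← StrictDualAux.bipolar hcl hco hcone ⟨0, h0⟩]
      rw [SetLike.mem_coe, mem_innerDualCone]
      intro y hy
      rw [hwD y hy]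
    have hwK' : -w ∈ K := by
      rw [← StrictDualAux.bipolar hcl hco hcone ⟨0, h0⟩]
      rw [SetLike.mem_coe, mem_innerDualCone]
      intro y hy
      rw [inner_neg_right, hwD y hy, neg_zero]
    have : w ∈ K ∩ (-K) := ⟨hwK, Set.mem_neg.mpr hwK'⟩
    rw [hsal] at this
    exact hwne this

/-- Dual of an intersection of closed convex cones is the closure of the sum of duals. -/
lemma StrictDualAux.dualInter [FiniteDimensional ℝ V] {K₁ K₂ : Set V}
    (h₁cl : IsClosed K₁) (h₁co : Convex ℝ K₁)
    (h₁cone : ∀ v ∈ K₁, ∀ t : ℝ, 0 < t → t • v ∈ K₁) (h₁0 : (0:V) ∈ K₁)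
    (h₂cl : IsClosed K₂) (h₂co : Convex ℝ K₂)
    (h₂cone : ∀ v ∈ K₂, ∀ t : ℝ, 0 < t → t • v ∈ K₂) (h₂0 : (0:V) ∈ K₂) :
    (((K₁ ∩ K₂).innerDualCone : Set V)) =
      closure ((K₁.innerDualCone : Set V) + (K₂.innerDualCone : Set V)) := by
  set D₁ : Set V := (K₁.innerDualCone : Set V) with hD₁
  set D₂ : Set V := (K₂.innerDualCone : Set V) with hD₂
  set A : Set V := D₁ + D₂ with hA
  have h0D₁ : (0:V) ∈ D₁ := pointed_innerDualCone K₁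
  have h0D₂ : (0:V) ∈ D₂ := pointed_innerDualCone K₂
  have hAco : Convex ℝ A := ((K₁.innerDualCone).convex).add ((K₂.innerDualCone).convex)
  have hAcone : ∀ v ∈ A, ∀ t : ℝ, 0 < t → t • v ∈ A := by
    rintro v hv t ht
    obtain ⟨a, ha, b, hb, rfl⟩ := Set.mem_add.mp hv
    rw [smul_add]
    exact Set.add_mem_add ((K₁.innerDualCone).smul_mem ht ha)
      ((K₂.innerDualCone).smul_mem ht hb)
  have hAne : A.Nonempty := ⟨0 + 0, Set.add_mem_add h0D₁ h0D₂⟩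
  have hdualA : (A.innerDualCone : Set V) = K₁ ∩ K₂ := by
    ext x
    constructor
    · intro hx
      have hx' := (mem_innerDualCone _ _).mp hx
      constructor
      · rw [← StrictDualAux.bipolar h₁cl h₁co h₁cone ⟨0, h₁0⟩, SetLike.mem_coe,
          mem_innerDualCone]
        intro y hy
        have := hx' (y + 0) (Set.add_mem_add hy h0D₂)
        simpa using this
      · rw [← StrictDualAux.bipolar h₂cl h₂co h₂cone ⟨0, h₂0⟩, SetLike.mem_coe,
          mem_innerDualCone]
        intro y hy
        have := hx' (0 + y) (Set.add_mem_add h0D₁ hy)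
        simpa using this
    · rintro ⟨hx₁, hx₂⟩
      rw [SetLike.mem_coe, mem_innerDualCone]
      intro y hy
      obtain ⟨a, ha, b, hb, rfl⟩ := Set.mem_add.mp hy
      have hxx₁ : x ∈ ((D₁.innerDualCone : Set V)) := by
        rw [hD₁, StrictDualAux.bipolar h₁cl h₁co h₁cone ⟨0, h₁0⟩]; exact hx₁
      have hxx₂ : x ∈ ((D₂.innerDualCone : Set V)) := by
        rw [hD₂, StrictDualAux.bipolar h₂cl h₂co h₂cone ⟨0, h₂0⟩]; exact hx₂
      have h1 := (mem_innerDualCone _ _).mp hxx₁ a ha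
      have h2 := (mem_innerDualCone _ _).mp hxx₂ b hb
      rw [inner_add_left]
      linarith
  have hclA : ((closure A).innerDualCone : Set V) = (A.innerDualCone : Set V) := by
    refine Set.Subset.antisymm ?_ ?_
    · intro x hx
      rw [SetLike.mem_coe, mem_innerDualCone]
      intro v hv
      exact (mem_innerDualCone _ _).mp hx v (subset_closure hv)
    intro x hx
    rw [SetLike.mem_coe, mem_innerDualCone]
    intro v hv
    have hcl : IsClosed {w : V | 0 ≤ ⟪w, x⟫} :=
      isClosed_le continuous_const (continuous_id.inner continuous_const)
    have hsub : A ⊆ {w : V | 0 ≤ ⟪w, x⟫} := fun w hw => (mem_innerDualCone _ _).mp hx w hw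
    exact closure_minimal hsub hcl hv
  have hbp := StrictDualAux.bipolar (K := closure A) isClosed_closure hAco.closure
    (StrictDualAux.closureCone hAcone) hAne.closure
  rw [hclA, hdualA] at hbp
  exact hbp

end AuxLemmas

/-- Strict convex duals of intersections and Minkowski sums of proper cones: for
nonempty open convex salient cones `C₁`, `C₂` in a finite-dimensional real inner
product space with `C₁ ∩ C₂` nonempty, one has
`(C₁ ∩ C₂)^⊛ = C₁^⊛ + C₂^⊛` and `(C₁ + C₂)^⊛ = C₁^⊛ ∩ C₂^⊛`. -/
theorem statement19 {V : Type*} [NormedAddCommGroup V] [InnerProductSpace ℝ V]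
    [FiniteDimensional ℝ V]
    (C₁ C₂ : Set V)
    (h₁ne : C₁.Nonempty) (h₁open : IsOpen C₁) (h₁conv : Convex ℝ C₁)
    (h₁cone : ∀ c ∈ C₁, ∀ t : ℝ, 0 < t → t • c ∈ C₁)
    (h₁sal : closure C₁ ∩ (-closure C₁) = {0})
    (h₂ne : C₂.Nonempty) (h₂open : IsOpen C₂) (h₂conv : Convex ℝ C₂)
    (h₂cone : ∀ c ∈ C₂, ∀ t : ℝ, 0 < t → t • c ∈ C₂)
    (h₂sal : closure C₂ ∩ (-closure C₂) = {0})
    (hcap : (C₁ ∩ C₂).Nonempty) :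
    strictDual (C₁ ∩ C₂) = strictDual C₁ + strictDual C₂ ∧
    strictDual (C₁ + C₂) = strictDual C₁ ∩ strictDual C₂ := by
  open StrictDualAux in
  -- basic facts about the closures
  have hK₁cone := StrictDualAux.closureCone h₁cone
  have hK₂cone := StrictDualAux.closureCone h₂cone
  have hK₁co : Convex ℝ (closure C₁) := h₁conv.closure
  have hK₂co : Convex ℝ (closure C₂) := h₂conv.closure
  have hK₁0 : (0:V) ∈ closure C₁ := StrictDualAux.zeroMemClosure h₁ne h₁cone
  have hK₂0 : (0:V) ∈ closure C₂ := StrictDualAux.zeroMemClosure h₂ne h₂cone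
  constructor
  · -- first statement
    have hcapcone : ∀ c ∈ C₁ ∩ C₂, ∀ t : ℝ, 0 < t → t • c ∈ C₁ ∩ C₂ := by
      rintro c ⟨hc₁, hc₂⟩ t ht
      exact ⟨h₁cone c hc₁ t ht, h₂cone c hc₂ t ht⟩
    have e₁ : strictDual C₁ = interior ((closure C₁).innerDualCone : Set V) :=
      StrictDualAux.strictDual_eq_interior h₁cone
    have e₂ : strictDual C₂ = interior ((closure C₂).innerDualCone : Set V) :=
      StrictDualAux.strictDual_eq_interior h₂cone
    have ecap : strictDual (C₁ ∩ C₂) =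
        interior ((closure (C₁ ∩ C₂)).innerDualCone : Set V) :=
      StrictDualAux.strictDual_eq_interior hcapcone
    have hclinter : closure (C₁ ∩ C₂) = closure C₁ ∩ closure C₂ :=
      StrictDualAux.closureInter h₁open h₁conv h₂open h₂conv hcap
    have hdi := StrictDualAux.dualInter isClosed_closure hK₁co hK₁cone hK₁0
      isClosed_closure hK₂co hK₂cone hK₂0
    have hne₁ : (interior ((closure C₁).innerDualCone : Set V)).Nonempty :=
      StrictDualAux.dualInteriorNonempty isClosed_closure hK₁co hK₁cone hK₁0 h₁sal
    have hne₂ : (interior ((closure C₂).innerDualCone : Set V)).Nonempty :=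
      StrictDualAux.dualInteriorNonempty isClosed_closure hK₂co hK₂cone hK₂0 h₂sal
    have hDco₁ : Convex ℝ (((closure C₁).innerDualCone : Set V)) :=
      ((closure C₁).innerDualCone).convex
    have hDco₂ : Convex ℝ (((closure C₂).innerDualCone : Set V)) :=
      ((closure C₂).innerDualCone).convex
    have hiadd : interior (((closure C₁).innerDualCone : Set V) +
          ((closure C₂).innerDualCone : Set V)) =
        interior (((closure C₁).innerDualCone : Set V)) +
          interior (((closure C₂).innerDualCone : Set V)) :=
      StrictDualAux.interiorAdd hDco₁ hDco₂ hne₁ hne₂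
    have hAine : (interior (((closure C₁).innerDualCone : Set V) +
        ((closure C₂).innerDualCone : Set V))).Nonempty := by
      rw [hiadd]
      exact ⟨_, Set.add_mem_add hne₁.choose_spec hne₂.choose_spec⟩
    have hic : interior (closure (((closure C₁).innerDualCone : Set V) +
          ((closure C₂).innerDualCone : Set V))) =
        interior (((closure C₁).innerDualCone : Set V) +
          ((closure C₂).innerDualCone : Set V)) :=
      StrictDualAux.interiorClosure (hDco₁.add hDco₂) hAine
    rw [ecap, hclinter, hdi, hic, hiadd, e₁, e₂]
  · -- second statement
    refine Set.Subset.antisymm ?_ ?_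
    · intro u hu
      have hmem : ∀ (C D : Set V), D.Nonempty →
          (∀ c ∈ D, ∀ t : ℝ, 0 < t → t • c ∈ D) →
          ∀ v ∈ closure C, v ∈ closure (C + D) := by
        intro C D hDne hDcone v hv
        obtain ⟨d, hd⟩ := hDne
        have hstep : ∀ t : ℝ, 0 < t → v + t • d ∈ closure (C + D) := by
          intro t ht
          have h1 : (· + t • d) '' closure C ⊆ closure ((· + t • d) '' C) :=
            image_closure_subset_closure_image (continuous_add_right _)
          have h2 : v + t • d ∈ (· + t • d) '' closure C := Set.mem_image_of_mem _ hv
          refine closure_mono ?_ (h1 h2)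
          rintro x ⟨a, ha, rfl⟩
          exact Set.add_mem_add ha (hDcone d hd t ht)
        have htend : Filter.Tendsto (fun t : ℝ => v + t • d)
            (nhdsWithin 0 (Set.Ioi (0:ℝ))) (nhds v) := by
          have hcont : Continuous fun t : ℝ => v + t • d :=
            continuous_const.add (continuous_id.smul continuous_const)
          have := hcont.tendsto 0
          simpa using this.mono_left nhdsWithin_le_nhds
        have hmm : v ∈ closure (closure (C + D)) := by
          refine mem_closure_of_tendsto htend ?_
          filter_upwards [self_mem_nhdsWithin] with t ht
          exact hstep t ht
        rwa [closure_closure] at hmm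
      constructor
      · intro v hv hvne
        exact hu v (hmem C₁ C₂ h₂ne h₂cone v hv) hvne
      · intro v hv hvne
        have hv' : v ∈ closure (C₂ + C₁) := hmem C₂ C₁ h₁ne h₁cone v hv
        rw [add_comm C₂ C₁] at hv'
        exact hu v hv' hvne
    · rintro u ⟨hu₁, hu₂⟩
      obtain ⟨ε₁, hε₁, hb₁⟩ := StrictDualAux.existsPosBound isClosed_closure hK₁cone hu₁
      obtain ⟨ε₂, hε₂, hb₂⟩ := StrictDualAux.existsPosBound isClosed_closure hK₂cone hu₂
      set ε : ℝ := min ε₁ ε₂ with hε'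
      have hε : 0 < ε := lt_min hε₁ hε₂
      have hALL : closure (C₁ + C₂) ⊆ {w : V | ε * ‖w‖ ≤ ⟪u, w⟫} := by
        refine closure_minimal ?_ ?_
        · rintro w hw
          obtain ⟨a, ha, b, hb, rfl⟩ := Set.mem_add.mp hw
          have h1 : ε₁ * ‖a‖ ≤ ⟪u, a⟫ := hb₁ a (subset_closure ha)
          have h2 : ε₂ * ‖b‖ ≤ ⟪u, b⟫ := hb₂ b (subset_closure hb)
          have h3 : ‖a + b‖ ≤ ‖a‖ + ‖b‖ := norm_add_le a b
          have h4 : ε ≤ ε₁ := min_le_left _ _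
          have h5 : ε ≤ ε₂ := min_le_right _ _
          have h6 : ⟪u, a + b⟫ = ⟪u, a⟫ + ⟪u, b⟫ := inner_add_right _ _ _
          simp only [Set.mem_setOf_eq]
          nlinarith [norm_nonneg a, norm_nonneg b]
        · exact isClosed_le (continuous_const.mul continuous_norm)
            (continuous_const.inner continuous_id)
      intro v hv hvne
      have h1 : ε * ‖v‖ ≤ ⟪u, v⟫ := hALL hv
      have h2 : 0 < ε * ‖v‖ := mul_pos hε (norm_pos_iff.mpr hvne)
      linarith
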